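/- arXiv:1207.3261 — 2 statements merged into one kernel-verified Lean document; each statement's English description precedes it below -/
import Mathlib

section
/- For full-rank density matrices ρ, σ, the trace norm distance is bounded by the χ²-divergence: ‖ρ − σ‖_tr² ≤ Tr((ρ−σ) σ^{-1/2} (ρ−σ) σ^{-1/2}). -/
open Matrix
open scoped ComplexOrder

noncomputable section

/-- Square complex matrices. -/
abbrev Mat (d : ℕ) := Matrix (Fin d) (Fin d) ℂ

variable {d : ℕ}

/-- `A ^ r` for a selfadjoint matrix `A`, via the continuous functional calculus. -/
def matPow (A : Mat d) (r : ℝ) : Mat d :=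
  cfc (fun x : ℝ => x ^ r) A

/-- `|A| = (A† A)^{1/2}`. -/
def matAbs (A : Mat d) : Mat d :=
  cfc Real.sqrt (Aᴴ * A)

/-- Matrix logarithm via the continuous functional calculus. -/
def matLog (A : Mat d) : Mat d :=
  cfc Real.log A

/-- The `σ`-weighted `L_p` norm `‖f‖_{p,σ} = (Tr |σ^{1/(2p)} f σ^{1/(2p)}|^p)^{1/p}`. -/
def pnorm (σ f : Mat d) (p : ℝ) : ℝ :=
  ((matPow (matAbs (matPow σ (1/(2*p)) * f * matPow σ (1/(2*p)))) p).trace.re) ^ (1/p)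

/-! ### Auxiliary lemmas -/

lemma contOn_mat (f : ℝ → ℝ) (A : Mat d) : ContinuousOn f (spectrum ℝ A) := by
  rw [continuousOn_iff_continuous_restrict]
  fun_prop

/-- Flatten a matrix into a Euclidean space vector. -/
def vec (M : Mat d) : EuclideanSpace ℂ (Fin d × Fin d) := WithLp.toLp 2 (fun p : Fin d × Fin d => M p.1 p.2)

lemma vec_inner (M N : Mat d) : (inner ℂ (_root_.vec M) (_root_.vec N) : ℂ) = (Mᴴ * N).trace := by
  simp only [PiLp.inner_apply, RCLike.inner_apply, _root_.vec, PiLp.toLp_apply, Matrix.trace, Matrix.diag,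
    Matrix.mul_apply, Matrix.conjTranspose_apply]
  rw [Fintype.sum_prod_type]
  rw [Finset.sum_comm]
  simp [mul_comm]

lemma tr_conj_mul_self_nonneg (M : Mat d) : 0 ≤ (Mᴴ * M).trace.re := by
  rw [← vec_inner]
  simpa using inner_self_nonneg (𝕜 := ℂ) (x := _root_.vec M)

lemma tr_cs (M N : Mat d) (hM : Mᴴ = M) (hN : Nᴴ = N) :
    ((M * N).trace.re) ^ 2 ≤ (M * M).trace.re * (N * N).trace.re := by
  have h1 : (M * N).trace = (inner ℂ (_root_.vec M) (_root_.vec N) : ℂ) := by rw [vec_inner, hM]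
  have h2 : (M * M).trace = (inner ℂ (_root_.vec M) (_root_.vec M) : ℂ) := by rw [vec_inner, hM]
  have h3 : (N * N).trace = (inner ℂ (_root_.vec N) (_root_.vec N) : ℂ) := by rw [vec_inner, hN]
  have h4 : ((inner ℂ (_root_.vec M) (_root_.vec M) : ℂ)).re = ‖_root_.vec M‖ ^ 2 := by
    simpa using inner_self_eq_norm_sq (𝕜 := ℂ) (_root_.vec M)
  have h5 : ((inner ℂ (_root_.vec N) (_root_.vec N) : ℂ)).re = ‖_root_.vec N‖ ^ 2 := by
    simpa using inner_self_eq_norm_sq (𝕜 := ℂ) (_root_.vec N)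
  rw [h1, h2, h3, h4, h5]
  have hn : ‖(inner ℂ (_root_.vec M) (_root_.vec N) : ℂ)‖ ≤ ‖_root_.vec M‖ * ‖_root_.vec N‖ := norm_inner_le_norm _ _
  have hre : ((inner ℂ (_root_.vec M) (_root_.vec N) : ℂ)).re ^ 2 ≤ ‖(inner ℂ (_root_.vec M) (_root_.vec N) : ℂ)‖ ^ 2 := by
    set z : ℂ := inner ℂ (_root_.vec M) (_root_.vec N)
    rw [Complex.sq_norm, Complex.normSq_apply]
    nlinarith [sq_nonneg z.im]
  calc ((inner ℂ (_root_.vec M) (_root_.vec N) : ℂ)).re ^ 2 ≤ ‖(inner ℂ (_root_.vec M) (_root_.vec N) : ℂ)‖ ^ 2 := hre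
    _ ≤ (‖_root_.vec M‖ * ‖_root_.vec N‖) ^ 2 := pow_le_pow_left₀ (norm_nonneg _) hn 2
    _ = ‖_root_.vec M‖ ^ 2 * ‖_root_.vec N‖ ^ 2 := by ring

lemma cfc_isHermitian (f : ℝ → ℝ) (A : Mat d) : (cfc f A).IsHermitian :=
  (cfc_predicate f A : IsSelfAdjoint _).star_eq

lemma spec_pos {σ : Mat d} (hσ : σ.PosDef) : ∀ x ∈ spectrum ℝ σ, 0 < x := by
  intro x hx
  rw [hσ.isHermitian.spectrum_real_eq_range_eigenvalues] at hx
  obtain ⟨i, rfl⟩ := hx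
  exact hσ.eigenvalues_pos i

lemma matPow_mul_matPow {σ : Mat d} (hσ : σ.PosDef) (a b : ℝ) :
    matPow σ a * matPow σ b = matPow σ (a + b) := by
  unfold matPow
  rw [← cfc_mul _ _ σ (contOn_mat _ _) (contOn_mat _ _)]
  exact cfc_congr fun x hx => (Real.rpow_add (spec_pos hσ x hx) a b).symm

lemma matPow_one {σ : Mat d} (hσ : σ.PosDef) : matPow σ 1 = σ := by
  unfold matPow
  rw [cfc_congr (g := fun x : ℝ => x) fun x _ => Real.rpow_one x]
  exact cfc_id' ℝ σ hσ.isHermitian.isSelfAdjoint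

set_option maxHeartbeats 1000000 in
/-- `‖ρ − σ‖_tr² ≤ χ²(ρ,σ) = Tr((ρ−σ)σ^{-1/2}(ρ−σ)σ^{-1/2})`. -/
theorem trace_norm_sq_le_chi2 (σ ρ : Mat d)
    (hσ : σ.PosDef) (hσ1 : σ.trace = 1) (hρ : ρ.PosDef) (hρ1 : ρ.trace = 1) :
    ((matAbs (ρ - σ)).trace.re) ^ 2 ≤
      ((ρ - σ) * matPow σ (-(1/2)) * (ρ - σ) * matPow σ (-(1/2))).trace.re := by
  set Δ : Mat d := ρ - σ with hΔdef
  have hΔ : Δ.IsHermitian := hρ.isHermitian.sub hσ.isHermitian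
  -- pieces
  set Q : Mat d := matPow σ (1/4) with hQdef
  set R : Mat d := matPow σ (-(1/4)) with hRdef
  set B : Mat d := matPow σ (1/2) with hBdef
  set P : Mat d := matPow σ (-(1/2)) with hPdef
  set S : Mat d := cfc Real.sign Δ with hSdef
  set X : Mat d := R * Δ * R with hXdef
  have hQH : Q.IsHermitian := cfc_isHermitian _ σ
  have hRH : R.IsHermitian := cfc_isHermitian _ σ
  have hBH : B.IsHermitian := cfc_isHermitian _ σ
  have hSH : S.IsHermitian := cfc_isHermitian _ Δ
  have hQR : Q * R = 1 := by
    rw [hQdef, hRdef, matPow_mul_matPow hσ]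
    norm_num
    unfold matPow
    rw [cfc_congr (g := fun _ : ℝ => (1 : ℝ)) fun x _ => Real.rpow_zero x]
    exact cfc_const_one ℝ σ hσ.isHermitian.isSelfAdjoint
  have hRQ : R * Q = 1 := by
    rw [hRdef, hQdef, matPow_mul_matPow hσ]
    norm_num
    unfold matPow
    rw [cfc_congr (g := fun _ : ℝ => (1 : ℝ)) fun x _ => Real.rpow_zero x]
    exact cfc_const_one ℝ σ hσ.isHermitian.isSelfAdjoint
  have hQQ : Q * Q = B := by
    rw [hQdef, hBdef, matPow_mul_matPow hσ]; norm_num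
  have hRR : R * R = P := by
    rw [hRdef, hPdef, matPow_mul_matPow hσ]; norm_num
  have hBB : B * B = σ := by
    rw [hBdef, matPow_mul_matPow hσ]; norm_num [matPow_one hσ]
  -- |Δ| = S * Δ
  have habs : matAbs Δ = S * Δ := by
    have h1 : Δᴴ * Δ = cfc (fun x : ℝ => x * x) Δ := by
      rw [cfc_mul _ _ Δ (contOn_mat _ _) (contOn_mat _ _), cfc_id' ℝ Δ hΔ.isSelfAdjoint, hΔ.eq]
    have h2 : matAbs Δ = cfc (fun x : ℝ => Real.sqrt (x * x)) Δ := by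
      unfold matAbs
      rw [h1, ← cfc_comp Real.sqrt (fun x : ℝ => x * x) Δ hΔ.isSelfAdjoint
        (Real.continuous_sqrt.continuousOn) (contOn_mat _ _)]
      rfl
    have h3 : cfc (fun x : ℝ => Real.sqrt (x * x)) Δ
        = cfc (fun x : ℝ => Real.sign x * x) Δ := by
      refine cfc_congr fun x _ => ?_
      rw [Real.sqrt_mul_self_eq_abs]
      rcases lt_trichotomy x 0 with h | h | h
      · rw [abs_of_neg h, Real.sign_of_neg h]; ring
      · simp [h]
      · rw [abs_of_pos h, Real.sign_of_pos h]; ring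
    rw [h2, h3, cfc_mul _ _ Δ (contOn_mat _ _) (contOn_mat _ _), cfc_id' ℝ Δ hΔ.isSelfAdjoint]
  -- Δ = Q * X * Q
  have hQXQ : Q * X * Q = Δ := by
    have : Q * X * Q = Q * R * Δ * (R * Q) := by
      rw [hXdef]; simp only [mul_assoc]
    rw [this, hQR, hRQ, one_mul, mul_one]
  have hXH : Xᴴ = X := by
    rw [hXdef, conjTranspose_mul, conjTranspose_mul, hRH.eq, hΔ.eq, mul_assoc]
  set M : Mat d := Q * S * Q with hMdef
  have hMH : Mᴴ = M := by
    rw [hMdef, conjTranspose_mul, conjTranspose_mul, hQH.eq, hSH.eq, mul_assoc]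
  -- LHS as Tr(M X)
  have hL : (matAbs Δ).trace = (M * X).trace := by
    rw [habs]
    conv_lhs => rw [← hQXQ]
    rw [show S * (Q * X * Q) = (S * (Q * X)) * Q by simp only [mul_assoc],
      trace_mul_comm, show Q * (S * (Q * X)) = (Q * S * Q) * X by simp only [mul_assoc]]
  -- Tr (M * M) = Tr (S * B * S * B)
  have hMM : (M * M).trace = (S * (B * (S * B))).trace := by
    rw [show M * M = Q * (S * (Q * Q) * (S * Q)) by rw [hMdef]; simp only [mul_assoc],
      trace_mul_comm, hQQ,
      show S * B * (S * Q) * Q = S * (B * (S * (Q * Q))) by simp only [mul_assoc], hQQ]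
  -- Tr(S B S B) ≤ Tr(σ S S) (real parts)
  have key1 : (S * (B * (S * B))).trace.re ≤ (σ * (S * S)).trace.re := by
    set C : Mat d := B * S - S * B with hCdef
    have hCH : Cᴴ = S * B - B * S := by
      rw [hCdef, conjTranspose_sub, conjTranspose_mul, conjTranspose_mul, hSH.eq, hBH.eq]
    have hexp : (Cᴴ * C).trace
        = (σ * (S * S)).trace - (S * (B * (S * B))).trace
          - (S * (B * (S * B))).trace + (σ * (S * S)).trace := by
      rw [hCH, hCdef, sub_mul, mul_sub, mul_sub, trace_sub, trace_sub, trace_sub]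
      have e1 : (S * B * (B * S)).trace = (σ * (S * S)).trace := by
        rw [show S * B * (B * S) = S * (B * (B * S)) by simp only [mul_assoc],
          trace_mul_comm, show B * (B * S) * S = B * B * (S * S) by simp only [mul_assoc], hBB]
      have e2 : (S * B * (S * B)).trace = (S * (B * (S * B))).trace := by
        simp only [mul_assoc]
      have e3 : (B * S * (B * S)).trace = (S * (B * (S * B))).trace := by
        rw [show B * S * (B * S) = B * (S * (B * S)) by simp only [mul_assoc],
          trace_mul_comm, show S * (B * S) * B = S * (B * (S * B)) by simp only [mul_assoc]]
      have e4 : (B * S * (S * B)).trace = (σ * (S * S)).trace := by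
        rw [show B * S * (S * B) = B * (S * (S * B)) by simp only [mul_assoc],
          trace_mul_comm, show S * (S * B) * B = S * S * (B * B) by simp only [mul_assoc],
          hBB, trace_mul_comm]
      rw [e1, e2, e3, e4]
      ring
    have hpos := tr_conj_mul_self_nonneg C
    rw [hexp] at hpos
    simp only [Complex.add_re, Complex.sub_re] at hpos
    linarith
  -- Tr(σ S S) ≤ 1
  have key2 : (σ * (S * S)).trace.re ≤ 1 := by
    set E : Mat d := cfc (fun x : ℝ => Real.sqrt (1 - Real.sign x ^ 2)) Δ with hEdef
    have hEH : E.IsHermitian := cfc_isHermitian _ Δ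
    have hEE : E * E = 1 - S * S := by
      rw [hEdef, ← cfc_mul _ _ Δ (contOn_mat _ _) (contOn_mat _ _)]
      have : cfc (fun x : ℝ => Real.sqrt (1 - Real.sign x ^ 2) * Real.sqrt (1 - Real.sign x ^ 2)) Δ
          = cfc (fun x : ℝ => 1 - Real.sign x * Real.sign x) Δ := by
        refine cfc_congr fun x _ => ?_
        rw [Real.mul_self_sqrt]
        · ring
        · rcases lt_trichotomy x 0 with h | h | h
          · rw [Real.sign_of_neg h]; norm_num
          · simp [h]
          · rw [Real.sign_of_pos h]; norm_num
      rw [this, cfc_sub (fun _ : ℝ => (1:ℝ)) (fun x : ℝ => Real.sign x * Real.sign x) Δ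
        (contOn_mat _ _) (contOn_mat _ _),
        cfc_const_one ℝ Δ hΔ.isSelfAdjoint, cfc_mul _ _ Δ (contOn_mat _ _) (contOn_mat _ _)]
    have hF := tr_conj_mul_self_nonneg (E * B)
    have hFF : ((E * B)ᴴ * (E * B)).trace = σ.trace - (σ * (S * S)).trace := by
      rw [conjTranspose_mul, hEH.eq, hBH.eq,
        show B * E * (E * B) = B * (E * E) * B by simp only [mul_assoc], hEE,
        mul_sub, sub_mul, mul_one, trace_sub, hBB]
      congr 1
      rw [show B * (S * S) * B = B * (S * (S * B)) by simp only [mul_assoc],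
        trace_mul_comm, show S * (S * B) * B = S * S * (B * B) by simp only [mul_assoc],
        hBB, trace_mul_comm]
    rw [hFF] at hF
    simp only [Complex.sub_re] at hF
    have : σ.trace.re = 1 := by rw [hσ1]; simp
    linarith
  -- Tr(X X) = RHS
  have hXX : (X * X).trace = (Δ * P * Δ * P).trace := by
    rw [show X * X = R * (Δ * (R * (R * (Δ * R)))) by rw [hXdef]; simp only [mul_assoc],
      trace_mul_comm,
      show Δ * (R * (R * (Δ * R))) * R = Δ * (R * R) * Δ * (R * R) by simp only [mul_assoc],
      hRR]
  -- put together
  have hcs := tr_cs M X hMH hXH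
  have hXnn : 0 ≤ (X * X).trace.re := by
    have := tr_conj_mul_self_nonneg X
    rwa [hXH] at this
  have hMMle : (M * M).trace.re ≤ 1 := by
    rw [hMM]; exact le_trans key1 key2
  calc ((matAbs Δ).trace.re) ^ 2 = ((M * X).trace.re) ^ 2 := by rw [hL]
    _ ≤ (M * M).trace.re * (X * X).trace.re := hcs
    _ ≤ 1 * (X * X).trace.re := by
        exact mul_le_mul_of_nonneg_right hMMle hXnn
    _ = (Δ * P * Δ * P).trace.re := by rw [one_mul, hXX]
end
end

section
/- Let L be the generator of the qubit depolarizing semigroup L(f) = γ(Tr(f)·𝟙/2 − f) on 2×2 matrices. Then its LS_2 constant equals γ, i.e. γ·Ent_2(f) ≤ E_2(f) for all positive definite 2×2 Hermitian f, where E_2(f) = −⟨f, L(f)⟩_σ with σ = 𝟙/2, and γ is the largest such constant (equality is approached). Equivalently, the infimum of E_2(f)/Ent_2(f) over positive definite f with Ent_2(f) ≠ 0 equals γ. -/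
open Matrix
open scoped ComplexOrder

noncomputable section

variable {d : ℕ}

/-- The `L_2` relative entropy. -/
def Ent2 (σ f : Mat d) : ℝ :=
  (((matPow σ (1/4) * f * matPow σ (1/4)) ^ 2 *
      matLog (matPow σ (1/4) * f * matPow σ (1/4))).trace.re)
  - (1/2) * (((matPow σ (1/4) * f * matPow σ (1/4)) ^ 2 * matLog σ).trace.re)
  - (1/2) * (((matPow σ (1/4) * f * matPow σ (1/4)) ^ 2).trace.re) *
      Real.log (((matPow σ (1/4) * f * matPow σ (1/4)) ^ 2).trace.re)

/-- The qubit depolarizing Liouvillian `L(f) = γ(Tr(f)·𝟙/2 − f)`. -/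
def depolL (γ : ℝ) (f : Mat 2) : Mat 2 :=
  (γ : ℂ) • ((f.trace / 2) • (1 : Mat 2) - f)

/-- The maximally mixed qubit state `σ = 𝟙/2`. -/
def sigma2 : Mat 2 := ((2 : ℂ))⁻¹ • (1 : Mat 2)

/-- The `L_2` Dirichlet form `E_2(f) = −⟨f, L(f)⟩_σ` for the qubit depolarizing semigroup. -/
def dirichlet2 (γ : ℝ) (f : Mat 2) : ℝ :=
  -((matPow sigma2 (1/2) * f * matPow sigma2 (1/2) * depolL γ f).trace.re)

namespace LS2aux

/-- helper function for the two-point log-Sobolev inequality -/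
def F (x : ℝ) : ℝ := (Real.sqrt x - 1)^2 - x * Real.log x + (x+1) * Real.log (x+1) - (x+1) * Real.log 2

/-- its derivative -/
def G (x : ℝ) : ℝ := 1 - (Real.sqrt x)⁻¹ - Real.log x + Real.log (x+1) - Real.log 2

lemma hasDerivAt_F {x : ℝ} (hx : 0 < x) : HasDerivAt F (G x) x := by
  have hs0 : 0 < Real.sqrt x := Real.sqrt_pos.mpr hx
  have h1 : HasDerivAt (fun y : ℝ => (Real.sqrt y - 1)^2)
      (2 * (Real.sqrt x - 1)^1 * (1 / (2 * Real.sqrt x))) x :=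
    ((Real.hasDerivAt_sqrt hx.ne').sub_const 1).pow 2
  have h2 : HasDerivAt (fun y : ℝ => y * Real.log y) (1 * Real.log x + x * x⁻¹) x :=
    (hasDerivAt_id x).mul (Real.hasDerivAt_log hx.ne')
  have h3 : HasDerivAt (fun y : ℝ => (y+1) * Real.log (y+1))
      ((1 * Real.log (x+1) + (x+1) * (x+1)⁻¹) * 1) x := by
    have inner : HasDerivAt (fun y : ℝ => y + 1) 1 x := (hasDerivAt_id x).add_const 1
    exact (((hasDerivAt_id (x+1)).mul (Real.hasDerivAt_log (by positivity))).comp x inner)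
  have h4 : HasDerivAt (fun y : ℝ => (y+1) * Real.log 2) (1 * Real.log 2) x :=
    ((hasDerivAt_id x).add_const 1).mul_const (Real.log 2)
  have := ((h1.sub h2).add h3).sub h4
  refine this.congr_deriv ?_
  have hss : Real.sqrt x * Real.sqrt x = x := Real.mul_self_sqrt hx.le
  unfold G
  field_simp
  ring

lemma hasDerivAt_G {x : ℝ} (hx : 0 < x) :
    HasDerivAt G ((Real.sqrt x - 1)^2 / (2 * x * Real.sqrt x * (x+1))) x := by
  have hs0 : 0 < Real.sqrt x := Real.sqrt_pos.mpr hx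
  have h1 : HasDerivAt (fun y : ℝ => (Real.sqrt y)⁻¹)
      (-(1 / (2 * Real.sqrt x)) / (Real.sqrt x)^2) x :=
    (Real.hasDerivAt_sqrt hx.ne').inv hs0.ne'
  have h2 : HasDerivAt Real.log x⁻¹ x := Real.hasDerivAt_log hx.ne'
  have h3 : HasDerivAt (fun y : ℝ => Real.log (y+1)) ((x+1)⁻¹ * 1) x :=
    (Real.hasDerivAt_log (by positivity)).comp x ((hasDerivAt_id x).add_const 1)
  have key : HasDerivAt G (0 - (-(1 / (2 * Real.sqrt x)) / (Real.sqrt x)^2) - x⁻¹ + (x+1)⁻¹ * 1 - 0) x := by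
    exact ((((hasDerivAt_const x 1).sub h1).sub h2).add h3).sub (hasDerivAt_const x (Real.log 2))
  convert key using 1
  have hss : Real.sqrt x * Real.sqrt x = x := Real.mul_self_sqrt hx.le
  field_simp
  linear_combination (1 + Real.sqrt x^2 + x) * hss

lemma G_mono : MonotoneOn G (Set.Ioi (0:ℝ)) := by
  apply monotoneOn_of_deriv_nonneg (convex_Ioi 0)
  · intro x hx
    exact (hasDerivAt_G hx).continuousAt.continuousWithinAt
  · intro x hx
    rw [interior_Ioi] at hx
    exact (hasDerivAt_G hx).differentiableAt.differentiableWithinAt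
  · intro x hx
    rw [interior_Ioi] at hx
    rw [(hasDerivAt_G hx).deriv]
    have hx' : (0:ℝ) < x := hx
    have hs0 : 0 < Real.sqrt x := Real.sqrt_pos.mpr hx'
    apply div_nonneg (sq_nonneg _)
    positivity

lemma G_one : G 1 = 0 := by
  norm_num [G, Real.sqrt_one]

lemma F_one : F 1 = 0 := by
  simp [F, Real.sqrt_one]
  norm_num

lemma F_nonneg {x : ℝ} (hx : 0 < x) : 0 ≤ F x := by
  rcases le_or_gt x 1 with h | h
  · -- antitone on Ioc 0 1
    have hanti : AntitoneOn F (Set.Ioc (0:ℝ) 1) := by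
      apply antitoneOn_of_deriv_nonpos (convex_Ioc 0 1)
      · intro y hy
        exact (hasDerivAt_F hy.1).continuousAt.continuousWithinAt
      · intro y hy
        rw [interior_Ioc] at hy
        exact (hasDerivAt_F hy.1).differentiableAt.differentiableWithinAt
      · intro y hy
        rw [interior_Ioc] at hy
        rw [(hasDerivAt_F hy.1).deriv]
        have := G_mono (Set.mem_Ioi.mpr hy.1) (Set.mem_Ioi.mpr one_pos) hy.2.le
        rw [G_one] at this
        exact this
    have := hanti (Set.mem_Ioc.mpr ⟨hx, h⟩) (Set.mem_Ioc.mpr ⟨one_pos, le_refl 1⟩) h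
    rw [F_one] at this
    exact this
  · -- monotone on Ici 1
    have hmono : MonotoneOn F (Set.Ici (1:ℝ)) := by
      apply monotoneOn_of_deriv_nonneg (convex_Ici 1)
      · intro y hy
        exact (hasDerivAt_F (lt_of_lt_of_le one_pos hy)).continuousAt.continuousWithinAt
      · intro y hy
        rw [interior_Ici] at hy
        exact (hasDerivAt_F (lt_trans one_pos hy)).differentiableAt.differentiableWithinAt
      · intro y hy
        rw [interior_Ici] at hy
        rw [(hasDerivAt_F (lt_trans one_pos hy)).deriv]
        have := G_mono (Set.mem_Ioi.mpr one_pos) (Set.mem_Ioi.mpr (lt_trans one_pos hy)) hy.le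
        rw [G_one] at this
        exact this
    have := hmono (Set.mem_Ici.mpr (le_refl 1)) (Set.mem_Ici.mpr h.le) h.le
    rw [F_one] at this
    exact this

/-- the two-point log-Sobolev inequality, scalar form -/
lemma two_point {x y : ℝ} (hx : 0 < x) (hy : 0 < y) :
    x * Real.log x + y * Real.log y - (x+y) * Real.log ((x+y)/2)
      ≤ (Real.sqrt x - Real.sqrt y)^2 := by
  have hxy : 0 < x + y := by linarith
  have h0 := F_nonneg (show 0 < x/y by positivity)
  rw [F] at h0
  rw [Real.sqrt_div hx.le, Real.log_div hx.ne' hy.ne'] at h0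
  rw [div_add_one hy.ne', Real.log_div hxy.ne' hy.ne'] at h0
  set sx := Real.sqrt x with hsx
  set sy := Real.sqrt y with hsy
  have hsy0 : 0 < sy := Real.sqrt_pos.mpr hy
  have hsx0 : 0 < sx := Real.sqrt_pos.mpr hx
  have hxe : x = sx^2 := (Real.sq_sqrt hx.le).symm
  have hye : y = sy^2 := (Real.sq_sqrt hy.le).symm
  have hL : Real.log ((x+y)/2) = Real.log (x+y) - Real.log 2 :=
    Real.log_div hxy.ne' (by norm_num)
  rw [hL]
  have key : (Real.sqrt x - Real.sqrt y)^2
      - (x * Real.log x + y * Real.log y - (x+y) * (Real.log (x+y) - Real.log 2))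
      = y * ((sx/sy - 1)^2 - x/y * (Real.log x - Real.log y)
          + (x+y)/y * (Real.log (x+y) - Real.log y) - (x+y)/y * Real.log 2) := by
    rw [hxe, hye]
    field_simp
    simp only [Real.sqrt_sq hsx0.le, Real.sqrt_sq hsy0.le]
    ring
  nlinarith [mul_nonneg hy.le h0]

/-- nonnegativity of the scalar entropy functional -/
lemma two_point_nonneg {x y : ℝ} (hx : 0 < x) (hy : 0 < y) :
    0 ≤ x * Real.log x + y * Real.log y - (x+y) * Real.log ((x+y)/2) := by
  have hxy : 0 < x + y := by linarith
  have hlx : Real.log ((x+y)/2) = Real.log ((x+y)/(2*x)) + Real.log x := by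
    rw [← Real.log_mul (by positivity) hx.ne']
    congr 1
    field_simp
  have hly : Real.log ((x+y)/2) = Real.log ((x+y)/(2*y)) + Real.log y := by
    rw [← Real.log_mul (by positivity) hy.ne']
    congr 1
    field_simp
  have h1 : Real.log ((x+y)/(2*x)) ≤ (x+y)/(2*x) - 1 :=
    Real.log_le_sub_one_of_pos (by positivity)
  have h2 : Real.log ((x+y)/(2*y)) ≤ (x+y)/(2*y) - 1 :=
    Real.log_le_sub_one_of_pos (by positivity)
  have e1 : x * ((x+y)/(2*x) - 1) = (x+y)/2 - x := by field_simp
  have e2 : y * ((x+y)/(2*y) - 1) = (x+y)/2 - y := by field_simp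
  have m1 := mul_le_mul_of_nonneg_left h1 hx.le
  have m2 := mul_le_mul_of_nonneg_left h2 hy.le
  have e3a : x * Real.log ((x+y)/2) = x * Real.log ((x+y)/(2*x)) + x * Real.log x := by
    rw [hlx]; ring
  have e3b : y * Real.log ((x+y)/2) = y * Real.log ((x+y)/(2*y)) + y * Real.log y := by
    rw [hly]; ring
  have e4 : (x+y) * Real.log ((x+y)/2)
      = x * Real.log ((x+y)/2) + y * Real.log ((x+y)/2) := by ring
  linarith

lemma log_one_sub_lb {u : ℝ} (h0 : 0 < u) (h : u ≤ 1/2) :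
    -u - u^2/2 - 2*u^3 ≤ Real.log (1-u) := by
  have habs : |u| < 1 := by rw [abs_of_pos h0]; linarith
  have key := Real.abs_log_sub_add_sum_range_le habs 2
  have hsum : (∑ i ∈ Finset.range 2, u ^ (i + 1) / (i + 1)) = u + u^2/2 := by
    simp [Finset.sum_range_succ]
    norm_num
  rw [hsum, abs_of_pos h0] at key
  norm_num at key
  have hb : u^3/(1-u) ≤ 2*u^3 := by
    rw [div_le_iff₀ (by linarith)]
    nlinarith [mul_nonneg (pow_nonneg h0.le 3) (by linarith : (0:ℝ) ≤ 1-2*u)]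
  linarith [(abs_le.mp key).1]

lemma log_one_add_lb {u : ℝ} (h0 : 0 < u) (h : u ≤ 1/2) :
    u - u^2/2 - 2*u^3 ≤ Real.log (1+u) := by
  have habs : |(-u)| < 1 := by rw [abs_neg, abs_of_pos h0]; linarith
  have key := Real.abs_log_sub_add_sum_range_le habs 2
  have hsum : (∑ i ∈ Finset.range 2, (-u) ^ (i + 1) / (i + 1)) = -u + u^2/2 := by
    simp [Finset.sum_range_succ]
    norm_num
  rw [hsum, abs_neg, abs_of_pos h0, show (1 - -u) = 1 + u by ring] at key
  norm_num at key
  have hb : u^3/(1-u) ≤ 2*u^3 := by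
    rw [div_le_iff₀ (by linarith)]
    nlinarith [mul_nonneg (pow_nonneg h0.le 3) (by linarith : (0:ℝ) ≤ 1-2*u)]
  linarith [(abs_le.mp key).1]

/-- lower bound on the binary entropy-type function -/
lemma g_lb {u : ℝ} (h0 : 0 < u) (h : u ≤ 1/2) :
    u^2 - 4*u^3 ≤ (1+u) * Real.log (1+u) + (1-u) * Real.log (1-u) := by
  have h1 := log_one_add_lb h0 h
  have h2 := log_one_sub_lb h0 h
  have m1 := mul_le_mul_of_nonneg_left h1 (show (0:ℝ) ≤ 1+u by linarith)
  have m2 := mul_le_mul_of_nonneg_left h2 (show (0:ℝ) ≤ 1-u by linarith)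
  nlinarith [m1, m2]

/-- upper bound on the Dirichlet form numerator -/
lemma D_ub {u : ℝ} (h0 : 0 < u) (h : u ≤ 1/2) :
    (Real.sqrt (1+u) - Real.sqrt (1-u))^2 ≤ u^2 + u^4 := by
  have h1 : (0:ℝ) ≤ 1+u := by linarith
  have h2 : (0:ℝ) ≤ 1-u := by linarith
  have hu2 : u^2 ≤ 1/4 := by nlinarith
  have hu4 : u^4 ≤ 1/16 := by nlinarith [sq_nonneg u]
  have e : (Real.sqrt (1+u) - Real.sqrt (1-u))^2
      = 2 - 2 * Real.sqrt ((1+u)*(1-u)) := by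
    rw [sub_sq, Real.sq_sqrt h1, Real.sq_sqrt h2, Real.sqrt_mul h1]
    ring
  rw [e]
  have hsq : 1 - u^2/2 - u^4/2 ≤ Real.sqrt ((1+u)*(1-u)) := by
    rw [show (1+u)*(1-u) = 1 - u^2 by ring]
    rw [← Real.sqrt_sq (show (0:ℝ) ≤ 1 - u^2/2 - u^4/2 by linarith)]
    apply Real.sqrt_le_sqrt
    have q1 : u^4 * u^2 ≤ u^4 * (1/4) :=
      mul_le_mul_of_nonneg_left hu2 (pow_nonneg h0.le 4)
    have q2 : u^4 * u^4 ≤ u^4 * (1/16) :=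
      mul_le_mul_of_nonneg_left hu4 (pow_nonneg h0.le 4)
    nlinarith [q1, q2, pow_nonneg h0.le 4]
  linarith

/-- the limiting argument -/
lemma limit_le {γ β : ℝ} (hγ : 0 < γ) (hβ : 0 < β)
    (h : ∀ u : ℝ, 0 < u → u ≤ 1/5 → β * (u^2 - 4*u^3) ≤ γ * (u^2 + u^4)) : β ≤ γ := by
  by_contra hlt
  push_neg at hlt
  set u := min (1/5 : ℝ) ((β - γ)/(2*(4*β+γ))) with hu
  have hd : (0:ℝ) < 2*(4*β+γ) := by linarith
  have hu0 : 0 < u := lt_min (by norm_num) (div_pos (by linarith) hd)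
  have hu5 : u ≤ 1/5 := min_le_left _ _
  have hub : u ≤ (β - γ)/(2*(4*β+γ)) := min_le_right _ _
  have hub' : u * (2*(4*β+γ)) ≤ β - γ := by
    rw [← le_div_iff₀ hd]
    exact hub
  have hkey := h u hu0 hu5
  have h3 : (0:ℝ) < u^3 := pow_pos hu0 3
  have p1 : u * (2*(4*β+γ)) * u^2 ≤ (β - γ) * u^2 :=
    mul_le_mul_of_nonneg_right hub' (sq_nonneg u)
  have c2 : γ * u^4 ≤ γ * u^3 := by
    apply mul_le_mul_of_nonneg_left _ hγ.le
    nlinarith [h3]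
  have q1 : 0 < β * u^3 := mul_pos hβ h3
  have q2 : 0 < γ * u^3 := mul_pos hγ h3
  nlinarith [hkey, p1, c2, q1, q2]

end LS2aux

/- ## auxiliary lemmas -/

lemma continuousOn_finite' {s : Set ℝ} (hs : s.Finite) (h : ℝ → ℝ) : ContinuousOn h s := by
  rw [continuousOn_iff_continuous_restrict]
  have : Finite s := hs.to_subtype
  exact continuous_of_discreteTopology

lemma continuousOn_spec' (A : Mat d) (h : ℝ → ℝ) : ContinuousOn h (spectrum ℝ A) :=
  continuousOn_finite' A.finite_real_spectrum h

lemma trace_cfc' (A : Mat d) (hA : A.IsHermitian) (h : ℝ → ℝ) :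
    (cfc h A).trace = ∑ i, (h (hA.eigenvalues i) : ℂ) := by
  rw [hA.cfc_eq, Matrix.IsHermitian.cfc, Unitary.conjStarAlgAut_apply, Matrix.trace_mul_cycle,
    Unitary.star_mul_self_of_mem (SetLike.coe_mem _), one_mul]
  simp [Matrix.trace_diagonal]

lemma re_trace_cfc (A : Mat d) (hA : A.IsHermitian) (h : ℝ → ℝ) :
    (cfc h A).trace.re = ∑ i, h (hA.eigenvalues i) := by
  rw [trace_cfc' A hA h]
  simp

lemma sigma2_eq : sigma2 = algebraMap ℝ (Mat 2) 2⁻¹ := by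
  rw [Algebra.algebraMap_eq_smul_one]
  ext i j
  simp [sigma2, Matrix.smul_apply]

lemma matPow_sigma2 (r : ℝ) : matPow sigma2 r = algebraMap ℝ (Mat 2) ((2⁻¹ : ℝ) ^ r) := by
  rw [matPow, sigma2_eq, cfc_algebraMap]

lemma matLog_sigma2 : matLog sigma2 = algebraMap ℝ (Mat 2) (Real.log 2⁻¹) := by
  rw [matLog, sigma2_eq, cfc_algebraMap]

lemma algebraMap_mul_eq (x : ℝ) (A : Mat d) : algebraMap ℝ (Mat d) x * A = x • A :=
  (Algebra.smul_def x A).symm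

lemma mul_algebraMap_eq (x : ℝ) (A : Mat d) : A * algebraMap ℝ (Mat d) x = x • A := by
  rw [← Algebra.commutes, algebraMap_mul_eq]

lemma spec_pos_s16 (f : Mat 2) (hf : f.PosDef) : spectrum ℝ f ⊆ Set.Ioi 0 := by
  rw [Matrix.IsHermitian.spectrum_real_eq_range_eigenvalues hf.1]
  rintro x ⟨i, rfl⟩
  exact hf.eigenvalues_pos i

lemma conj_sigma_pow (f : Mat 2) (r : ℝ) :
    matPow sigma2 r * f * matPow sigma2 r = ((2⁻¹:ℝ) ^ r * (2⁻¹:ℝ) ^ r) • f := by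
  rw [matPow_sigma2, algebraMap_mul_eq, smul_mul_assoc, mul_algebraMap_eq, smul_smul]


lemma smul_trace_re (r : ℝ) (A : Mat d) (hA : A.IsHermitian) (h : ℝ → ℝ) :
    ((r • cfc h A).trace).re = r * ∑ i, h (hA.eigenvalues i) := by
  rw [Matrix.trace_smul, trace_cfc' A hA h]
  have : ∑ i, (h (hA.eigenvalues i) : ℂ) = ((∑ i, h (hA.eigenvalues i) : ℝ) : ℂ) := by
    push_cast; rfl
  rw [this, Complex.real_smul, ← Complex.ofReal_mul, Complex.ofReal_re]

/-- the eigenvalue formula for Ent2. -/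
lemma ent2_formula (f : Mat 2) (hf : f.PosDef) :
    Ent2 sigma2 f =
      (1/2) * ((hf.1.eigenvalues 0)^2 * Real.log (hf.1.eigenvalues 0)
             + (hf.1.eigenvalues 1)^2 * Real.log (hf.1.eigenvalues 1))
      - (1/4) * ((hf.1.eigenvalues 0)^2 + (hf.1.eigenvalues 1)^2) *
          Real.log (((hf.1.eigenvalues 0)^2 + (hf.1.eigenvalues 1)^2)/2) := by
  have hsa : IsSelfAdjoint f := hf.1
  have hspec := spec_pos_s16 f hf
  set a := hf.1.eigenvalues with ha
  have hapos : ∀ i, 0 < a i := fun i => hf.eigenvalues_pos i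
  set q : ℝ := (2⁻¹:ℝ) ^ ((1:ℝ)/4) with hqdef
  set c : ℝ := q * q with hcdef
  have hq0 : (0:ℝ) < q := Real.rpow_pos_of_pos (by norm_num) _
  have hc0 : (0:ℝ) < c := mul_pos hq0 hq0
  have hcc : c * c = 2⁻¹ := by
    rw [hcdef, hqdef, ← Real.rpow_add (by norm_num : (0:ℝ) < 2⁻¹),
      ← Real.rpow_add (by norm_num : (0:ℝ) < 2⁻¹),
      show ((1:ℝ)/4 + 1/4 + (1/4 + 1/4)) = (1:ℝ) by norm_num, Real.rpow_one]
  have hlogc : Real.log c = (1/2) * Real.log 2⁻¹ := by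
    rw [hcdef, hqdef, ← Real.rpow_add (by norm_num : (0:ℝ) < 2⁻¹),
      Real.log_rpow (by norm_num)]
    norm_num
  have hg : matPow sigma2 (1/4) * f * matPow sigma2 (1/4) = c • f := by
    rw [conj_sigma_pow]
  have hlog : matLog (c • f) = cfc (fun x : ℝ => Real.log c + Real.log x) f := by
    rw [matLog, ← cfc_comp_smul c Real.log f
      (continuousOn_finite' ((Matrix.finite_real_spectrum (A := f)).image _) _) hsa]
    apply cfc_congr
    intro x hx
    have hx' : 0 < x := hspec hx
    simp [smul_eq_mul, Real.log_mul (ne_of_gt hc0) (ne_of_gt hx')]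
  have hsq : (c • f)^2 = (c*c) • f^2 := by
    rw [smul_pow, sq c]
  have hf2 : f^2 = cfc (fun x : ℝ => x^2) f := (cfc_pow_id f 2 hsa).symm
  -- term 1
  have t1 : ((c • f)^2 * matLog (c • f)).trace.re
      = (c*c) * ∑ i, (a i)^2 * (Real.log c + Real.log (a i)) := by
    rw [hsq, hlog, hf2, smul_mul_assoc,
      ← cfc_mul (fun x : ℝ => x^2) (fun x : ℝ => Real.log c + Real.log x) f
        (continuousOn_spec' f _) (continuousOn_spec' f _),
      smul_trace_re _ f hf.1]
  -- term 2
  have t2 : ((c • f)^2 * matLog sigma2).trace.re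
      = (c*c) * Real.log 2⁻¹ * ∑ i, (a i)^2 := by
    rw [matLog_sigma2, mul_algebraMap_eq, hsq, smul_smul, hf2,
      smul_trace_re _ f hf.1]
    ring
  -- term 3
  have t3 : ((c • f)^2).trace.re = (c*c) * ∑ i, (a i)^2 := by
    rw [hsq, hf2, smul_trace_re _ f hf.1]
  rw [Ent2, hg, t1, t2, t3, hcc]
  rw [Fin.sum_univ_two, Fin.sum_univ_two]
  have hT : (0:ℝ) < (a 0)^2 + (a 1)^2 := add_pos (pow_pos (hapos 0) 2) (pow_pos (hapos 1) 2)
  have h3 : Real.log ((2:ℝ)⁻¹ * ((a 0)^2 + (a 1)^2)) =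
      Real.log ((a 0)^2 + (a 1)^2) + Real.log 2⁻¹ := by
    rw [Real.log_mul (by norm_num) (ne_of_gt hT), add_comm]
  have h4 : Real.log (((a 0)^2 + (a 1)^2)/2) = Real.log ((a 0)^2 + (a 1)^2) + Real.log 2⁻¹ := by
    rw [div_eq_mul_inv, Real.log_mul (ne_of_gt hT) (by norm_num)]
  rw [h3, h4, hlogc]
  ring

/-- the eigenvalue formula for the Dirichlet form. -/
lemma dirichlet2_formula (γ : ℝ) (f : Mat 2) (hf : f.PosDef) :
    dirichlet2 γ f = (γ/4) * ((hf.1.eigenvalues 0) - (hf.1.eigenvalues 1))^2 := by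
  have hsa : IsSelfAdjoint f := hf.1
  set a := hf.1.eigenvalues with ha
  have hf2 : f^2 = cfc (fun x : ℝ => x^2) f := (cfc_pow_id f 2 hsa).symm
  have htr : f.trace = ((a 0 + a 1 : ℝ) : ℂ) := by
    conv_lhs => rw [← cfc_id ℝ f hsa]
    rw [trace_cfc' f hf.1]
    push_cast
    rw [Fin.sum_univ_two]
    rfl
  have htr2 : (f^2).trace = ((a 0^2 + a 1^2 : ℝ) : ℂ) := by
    rw [hf2, trace_cfc' f hf.1]
    push_cast
    rw [Fin.sum_univ_two]
  have hmm : (2⁻¹:ℝ) ^ ((1:ℝ)/2) * (2⁻¹:ℝ) ^ ((1:ℝ)/2) = 2⁻¹ := by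
    rw [← Real.rpow_add (by norm_num : (0:ℝ) < 2⁻¹),
      show ((1:ℝ)/2 + 1/2) = (1:ℝ) by norm_num, Real.rpow_one]
  have hconj : matPow sigma2 (1/2) * f * matPow sigma2 (1/2) = (2⁻¹:ℝ) • f := by
    rw [conj_sigma_pow, hmm]
  have hexp : f * depolL γ f = (γ:ℂ) • ((f.trace/2) • f - f^2) := by
    rw [depolL, mul_smul_comm, mul_sub, mul_smul_comm, mul_one, sq]
  have hkey : (f * depolL γ f).trace
      = ((γ * ((a 0 + a 1)^2/2 - (a 0^2 + a 1^2)) : ℝ) : ℂ) := by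
    rw [hexp, Matrix.trace_smul, Matrix.trace_sub, Matrix.trace_smul, htr, htr2]
    simp only [smul_eq_mul]
    push_cast
    ring
  rw [dirichlet2, hconj, smul_mul_assoc, Matrix.trace_smul, hkey, Complex.real_smul,
    ← Complex.ofReal_mul, Complex.ofReal_re]
  ring


/- ## the scalar entropy form and its properties -/

def E2form (a b : ℝ) : ℝ :=
  (1/2) * (a^2 * Real.log a + b^2 * Real.log b)
    - (1/4) * (a^2 + b^2) * Real.log ((a^2 + b^2)/2)

lemma ent2_formula' (f : Mat 2) (hf : f.PosDef) :
    Ent2 sigma2 f = E2form (hf.1.eigenvalues 0) (hf.1.eigenvalues 1) := by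
  unfold E2form
  exact ent2_formula f hf

lemma E2form_comm (a b : ℝ) : E2form a b = E2form b a := by
  unfold E2form
  rw [add_comm (b^2) (a^2)]
  ring

lemma E2form_le {a b : ℝ} (ha : 0 < a) (hb : 0 < b) :
    E2form a b ≤ (1/4) * (a - b)^2 := by
  have h := LS2aux.two_point (pow_pos ha 2) (pow_pos hb 2)
  rw [Real.sqrt_sq ha.le, Real.sqrt_sq hb.le] at h
  have e : 4 * E2form a b
      = a^2 * Real.log (a^2) + b^2 * Real.log (b^2)
        - (a^2 + b^2) * Real.log ((a^2 + b^2)/2) := by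
    unfold E2form
    rw [Real.log_pow, Real.log_pow]
    push_cast
    ring
  linarith

lemma E2form_nonneg {a b : ℝ} (ha : 0 < a) (hb : 0 < b) : 0 ≤ E2form a b := by
  have h := LS2aux.two_point_nonneg (pow_pos ha 2) (pow_pos hb 2)
  have e : 4 * E2form a b
      = a^2 * Real.log (a^2) + b^2 * Real.log (b^2)
        - (a^2 + b^2) * Real.log ((a^2 + b^2)/2) := by
    unfold E2form
    rw [Real.log_pow, Real.log_pow]
    push_cast
    ring
  linarith

/- ## generic trace identities -/

lemma trace_eq_sum_eig (f : Mat 2) (hf : f.PosDef) :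
    f.trace = ((hf.1.eigenvalues 0 + hf.1.eigenvalues 1 : ℝ) : ℂ) := by
  have hsa : IsSelfAdjoint f := hf.1
  conv_lhs => rw [← cfc_id ℝ f hsa]
  rw [trace_cfc' f hf.1]
  push_cast
  rw [Fin.sum_univ_two]
  rfl

lemma trace_sq_eq_sum_eig (f : Mat 2) (hf : f.PosDef) :
    (f^2).trace = ((hf.1.eigenvalues 0^2 + hf.1.eigenvalues 1^2 : ℝ) : ℂ) := by
  have hsa : IsSelfAdjoint f := hf.1
  have hf2 : f^2 = cfc (fun x : ℝ => x^2) f := (cfc_pow_id f 2 hsa).symm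
  rw [hf2, trace_cfc' f hf.1]
  push_cast
  rw [Fin.sum_univ_two]

/- ## the near-optimal family -/

def fDiag (u : ℝ) : Mat 2 :=
  Matrix.diagonal ![(Real.sqrt (1+u) : ℂ), (Real.sqrt (1-u) : ℂ)]

lemma fDiag_posDef {u : ℝ} (h0 : 0 < u) (h : u ≤ 1/2) : (fDiag u).PosDef := by
  rw [fDiag, Matrix.posDef_diagonal_iff]
  intro i
  fin_cases i <;>
    simp [Complex.zero_lt_real, Real.sqrt_pos] <;> linarith

lemma fDiag_trace {u : ℝ} :
    (fDiag u).trace = ((Real.sqrt (1+u) + Real.sqrt (1-u) : ℝ) : ℂ) := by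
  rw [fDiag, Matrix.trace_diagonal, Fin.sum_univ_two]
  simp

lemma fDiag_sq {u : ℝ} (h0 : 0 < u) (h : u ≤ 1/2) :
    ((fDiag u)^2).trace = 2 := by
  rw [sq, fDiag, Matrix.diagonal_mul_diagonal, Matrix.trace_diagonal, Fin.sum_univ_two]
  simp only [Pi.mul_apply, Matrix.cons_val_zero, Matrix.cons_val_one, Matrix.head_cons]
  rw [← Complex.ofReal_mul, ← Complex.ofReal_mul,
    Real.mul_self_sqrt (by linarith), Real.mul_self_sqrt (by linarith)]
  push_cast
  ring

lemma pair_eq {a b c dd : ℝ} (hs : a + b = c + dd) (hp : a * b = c * dd) :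
    (a = c ∧ b = dd) ∨ (a = dd ∧ b = c) := by
  have h : (a - c) * (a - dd) = 0 := by linear_combination a*hs - hp
  rcases mul_eq_zero.mp h with h' | h'
  · left
    have hac : a = c := by linarith [sub_eq_zero.mp h']
    exact ⟨hac, by linarith⟩
  · right
    have had : a = dd := by linarith [sub_eq_zero.mp h']
    exact ⟨had, by linarith⟩

lemma fDiag_eig_pin {u : ℝ} (h0 : 0 < u) (h : u ≤ 1/2) (hf : (fDiag u).PosDef) :
    (hf.1.eigenvalues 0 = Real.sqrt (1+u) ∧ hf.1.eigenvalues 1 = Real.sqrt (1-u)) ∨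
    (hf.1.eigenvalues 0 = Real.sqrt (1-u) ∧ hf.1.eigenvalues 1 = Real.sqrt (1+u)) := by
  set a0 := hf.1.eigenvalues 0 with ha0
  set a1 := hf.1.eigenvalues 1 with ha1
  set c := Real.sqrt (1+u) with hc
  set dd := Real.sqrt (1-u) with hd
  have hs : a0 + a1 = c + dd := by
    have h1 := trace_eq_sum_eig _ hf
    rw [fDiag_trace] at h1
    exact_mod_cast h1.symm
  have h2 : a0^2 + a1^2 = 2 := by
    have h1 := trace_sq_eq_sum_eig _ hf
    rw [fDiag_sq h0 h] at h1
    exact_mod_cast h1.symm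
  have hc2 : c^2 = 1 + u := Real.sq_sqrt (by linarith)
  have hd2 : dd^2 = 1 - u := Real.sq_sqrt (by linarith)
  have hp : a0 * a1 = c * dd := by
    linear_combination (a0 + a1 + (c + dd))/2 * hs - (1/2) * h2 + (1/2) * hc2 + (1/2) * hd2
  exact pair_eq hs hp

lemma fDiag_vals (γ : ℝ) {u : ℝ} (h0 : 0 < u) (h : u ≤ 1/2) :
    Ent2 sigma2 (fDiag u) = E2form (Real.sqrt (1+u)) (Real.sqrt (1-u)) ∧
    dirichlet2 γ (fDiag u) = (γ/4) * (Real.sqrt (1+u) - Real.sqrt (1-u))^2 := by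
  have hf := fDiag_posDef h0 h
  have he := ent2_formula' _ hf
  have hd := dirichlet2_formula γ _ hf
  rcases fDiag_eig_pin h0 h hf with ⟨e0, e1⟩ | ⟨e0, e1⟩
  · rw [e0, e1] at he hd
    exact ⟨he, hd⟩
  · rw [e0, e1] at he hd
    rw [E2form_comm] at he
    constructor
    · exact he
    · rw [hd]; ring

lemma E2form_val {u : ℝ} (h0 : 0 < u) (h : u ≤ 1/2) :
    E2form (Real.sqrt (1+u)) (Real.sqrt (1-u))
      = (1/4) * ((1+u) * Real.log (1+u) + (1-u) * Real.log (1-u)) := by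
  unfold E2form
  rw [Real.sq_sqrt (by linarith : (0:ℝ) ≤ 1+u), Real.sq_sqrt (by linarith : (0:ℝ) ≤ 1-u),
    Real.log_sqrt (by linarith), Real.log_sqrt (by linarith),
    show (1+u+(1-u))/2 = (1:ℝ) by ring, Real.log_one]
  ring

/- ## the main theorem -/

/-- the LS₂ constant of the qubit depolarizing semigroup equals `γ`:
`γ` is the largest constant `α` with `α Ent₂(f) ≤ E₂(f)` for all positive definite `f`,
and `γ` is the infimum of `E₂(f)/Ent₂(f)` over positive definite `f` with `Ent₂(f) ≠ 0`. -/
theorem qubit_depolarizing_LS2 (γ : ℝ) (hγ : 0 < γ) :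
    IsGreatest {α : ℝ | ∀ f : Mat 2, f.PosDef → α * Ent2 sigma2 f ≤ dirichlet2 γ f} γ ∧
    IsGLB {r : ℝ | ∃ f : Mat 2, f.PosDef ∧ Ent2 sigma2 f ≠ 0 ∧
           r = dirichlet2 γ f / Ent2 sigma2 f} γ := by
  have hmem : ∀ f : Mat 2, f.PosDef → γ * Ent2 sigma2 f ≤ dirichlet2 γ f := by
    intro f hf
    rw [ent2_formula' f hf, dirichlet2_formula γ f hf]
    have hle := E2form_le (hf.eigenvalues_pos 0) (hf.eigenvalues_pos 1)
    have := mul_le_mul_of_nonneg_left hle hγ.le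
    linarith
  constructor
  · constructor
    · exact hmem
    · -- γ is an upper bound of the admissible constants
      intro α hα
      rcases le_or_gt α 0 with hneg | hpos
      · linarith
      · apply LS2aux.limit_le hγ hpos
        intro u hu0 hu5
        have hu2 : u ≤ 1/2 := by linarith
        have hf := fDiag_posDef hu0 hu2
        obtain ⟨hE, hD⟩ := fDiag_vals γ hu0 hu2
        have hineq := hα (fDiag u) hf
        rw [hE, hD, E2form_val hu0 hu2] at hineq
        have hg := LS2aux.g_lb hu0 hu2
        have hDu := LS2aux.D_ub hu0 hu2
        have m1 := mul_le_mul_of_nonneg_left hg hpos.le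
        have m2 := mul_le_mul_of_nonneg_left hDu (by positivity : (0:ℝ) ≤ γ/4)
        nlinarith [m1, m2, hineq]
  · constructor
    · -- γ is a lower bound of the ratios
      rintro r ⟨f, hf, hne, rfl⟩
      have hE := ent2_formula' f hf
      have hnn : 0 ≤ Ent2 sigma2 f := by
        rw [hE]
        exact E2form_nonneg (hf.eigenvalues_pos 0) (hf.eigenvalues_pos 1)
      have hpos : 0 < Ent2 sigma2 f := lt_of_le_of_ne hnn (Ne.symm hne)
      rw [le_div_iff₀ hpos]
      exact hmem f hf
    · -- γ is the greatest lower bound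
      intro b hb
      rcases le_or_gt b 0 with hneg | hpos
      · linarith
      · apply LS2aux.limit_le hγ hpos
        intro u hu0 hu5
        have hu2 : u ≤ 1/2 := by linarith
        have hf := fDiag_posDef hu0 hu2
        obtain ⟨hE, hD⟩ := fDiag_vals γ hu0 hu2
        have hg := LS2aux.g_lb hu0 hu2
        have hDu := LS2aux.D_ub hu0 hu2
        have hEntpos : 0 < Ent2 sigma2 (fDiag u) := by
          rw [hE, E2form_val hu0 hu2]
          have : 0 < u^2 - 4*u^3 := by nlinarith [pow_pos hu0 2, pow_pos hu0 3]
          linarith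
        have hmemS : dirichlet2 γ (fDiag u) / Ent2 sigma2 (fDiag u) ∈
            {r : ℝ | ∃ f : Mat 2, f.PosDef ∧ Ent2 sigma2 f ≠ 0 ∧
              r = dirichlet2 γ f / Ent2 sigma2 f} :=
          ⟨fDiag u, hf, ne_of_gt hEntpos, rfl⟩
        have hbr := hb hmemS
        rw [le_div_iff₀ hEntpos] at hbr
        -- b * Ent ≤ E;  Ent ≥ (1/4)(u²−4u³);  E ≤ (γ/4)(u²+u⁴)
        have hEntlb : (1/4) * (u^2 - 4*u^3) ≤ Ent2 sigma2 (fDiag u) := by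
          rw [hE, E2form_val hu0 hu2]
          linarith
        have hEub : dirichlet2 γ (fDiag u) ≤ (γ/4) * (u^2 + u^4) := by
          rw [hD]
          have := mul_le_mul_of_nonneg_left hDu (by positivity : (0:ℝ) ≤ γ/4)
          linarith
        have m1 := mul_le_mul_of_nonneg_left hEntlb hpos.le
        nlinarith [m1, hbr, hEub]
end
end
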